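/- Under graph cluster randomization with balanced cluster-level treatments, the bias of the Horvitz–Thompson estimator equals (γ/n)·(4·trace(C·Cov[t]) − Σ_{i,j∈[K]} C_{ij}), where C_{ij} counts edges between clusters S_i and S_j. -/

import Mathlib

open MeasureTheory ProbabilityTheory

/-- Under graph cluster randomization with balanced cluster-level treatments, the bias
of the Horvitz–Thompson estimator equals
`(γ/n)·(4·trace(C·Cov[t]) − ∑_{i,j∈[K]} C_{ij})`, where `C_{kl}` counts the (directed)
edges from cluster `S_k` to cluster `S_l`. -/
theorem bias_HT_cluster_randomization {Ω : Type*} [MeasurableSpace Ω]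
    (μ : Measure Ω) [IsProbabilityMeasure μ]
    (n K : ℕ) (hn : 0 < n)
    (N : Fin n → Finset (Fin n)) (d : Fin n → ℕ) (hd : ∀ i, d i = (N i).card)
    (α β : Fin n → ℝ) (γ : ℝ)
    (Y : (Fin n → ℝ) → Fin n → ℝ)
    (hY : ∀ z i, Y z i = α i + β i * z i + γ * ∑ j ∈ N i, z j)
    -- cluster membership map: unit `i` belongs to cluster `c i`
    (c : Fin n → Fin K)
    -- cluster-level treatments, balanced
    (t : Ω → Fin K → ℝ) (hmeas : Measurable t)
    (hval : ∀ ω k, t ω k = 0 ∨ t ω k = 1)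
    (hE : ∀ k, ∫ ω, t ω k ∂μ = 1 / 2)
    -- unit-level treatments given by graph cluster randomization
    (z : Ω → Fin n → ℝ) (hz : ∀ ω i, z ω i = t ω (c i))
    -- edge-count matrix between clusters
    (C : Matrix (Fin K) (Fin K) ℝ)
    (hC : ∀ k l, C k l = ∑ u ∈ Finset.univ.filter (fun u => c u = k),
        (((N u).filter (fun v => c v = l)).card : ℝ))
    -- covariance matrix of the cluster treatment vector
    (Covt : Matrix (Fin K) (Fin K) ℝ)
    (hCovt : ∀ k l, Covt k l
      = (∫ ω, t ω k * t ω l ∂μ) - (∫ ω, t ω k ∂μ) * (∫ ω, t ω l ∂μ))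
    (τ : ℝ) (hτ : τ = (1 / (n : ℝ)) * ∑ i, (β i + γ * (d i : ℝ)))
    (τhat : Ω → ℝ)
    (hτhat : ∀ ω, τhat ω = (1 / (n : ℝ)) * ∑ i,
      (z ω i / (∫ ω', z ω' i ∂μ) - (1 - z ω i) / (∫ ω', (1 - z ω' i) ∂μ)) * Y (z ω) i) :
    (∫ ω, τhat ω ∂μ) - τ
      = (γ / (n : ℝ)) * (4 * Matrix.trace (C * Covt) - ∑ k, ∑ l, C k l) := by
  classical
  -- componentwise measurability and integrability of t
  have hm : ∀ k, Measurable fun ω => t ω k := fun k => (measurable_pi_apply k).comp hmeas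
  have hint : ∀ k, Integrable (fun ω => t ω k) μ := by
    intro k
    refine (integrable_const (1:ℝ)).mono' ((hm k).aestronglyMeasurable) ?_
    filter_upwards with ω
    rcases hval ω k with h | h <;> simp [h]
  have hint2 : ∀ k l, Integrable (fun ω => t ω k * t ω l) μ := by
    intro k l
    refine (integrable_const (1:ℝ)).mono' (((hm k).mul (hm l)).aestronglyMeasurable) ?_
    filter_upwards with ω
    rcases hval ω k with h | h <;> rcases hval ω l with h' | h' <;> simp [h, h']
  set E : Fin K → Fin K → ℝ := fun k l => ∫ ω, t ω k * t ω l ∂μ with hEdef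
  have hEsymm : ∀ k l, E k l = E l k := by
    intro k l
    simp only [hEdef]
    congr 1; funext ω; ring
  have hEdiag : ∀ k, E k k = 1/2 := by
    intro k
    have h1 : (fun ω => t ω k * t ω k) = fun ω => t ω k := by
      funext ω; rcases hval ω k with h | h <;> simp [h]
    simp only [hEdef]
    rw [h1]; exact hE k
  -- integrals of z and 1 - z
  have hz1 : ∀ i, ∫ ω, z ω i ∂μ = 1/2 := by
    intro i
    simp only [hz]
    exact hE (c i)
  have hz2 : ∀ i, ∫ ω, (1 - z ω i) ∂μ = 1/2 := by
    intro i
    simp only [hz]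
    rw [integral_sub (integrable_const 1) (hint (c i)), integral_const, hE (c i)]
    norm_num
  -- per-unit integrand
  set F : Fin n → Ω → ℝ := fun i ω =>
    (4 * t ω (c i) - 2) * (α i + β i * t ω (c i) + γ * ∑ j ∈ N i, t ω (c j)) with hFdef
  have hτhat' : ∀ ω, τhat ω = (1 / (n:ℝ)) * ∑ i, F i ω := by
    intro ω
    rw [hτhat]
    congr 1
    refine Finset.sum_congr rfl fun i _ => ?_
    rw [hY, hz1 i, hz2 i, hFdef]
    have hsum : ∑ j ∈ N i, z ω j = ∑ j ∈ N i, t ω (c j) :=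
      Finset.sum_congr rfl fun j _ => hz ω j
    rw [hz ω i, hsum]
    ring
  have hFeq : ∀ i, F i = fun ω =>
      4 * α i * t ω (c i) + (4 * β i) * (t ω (c i) * t ω (c i))
        + (4 * γ) * ∑ j ∈ N i, t ω (c i) * t ω (c j)
        - (2 * α i) - (2 * β i) * t ω (c i) - (2 * γ) * ∑ j ∈ N i, t ω (c j) := by
    intro i
    funext ω
    simp only [hFdef, ← Finset.mul_sum]
    ring
  have hintsum1 : ∀ i, Integrable (fun ω => ∑ j ∈ N i, t ω (c i) * t ω (c j)) μ := by
    intro i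
    exact integrable_finset_sum _ fun j _ => hint2 (c i) (c j)
  have hintsum2 : ∀ i, Integrable (fun ω => ∑ j ∈ N i, t ω (c j)) μ := by
    intro i
    exact integrable_finset_sum _ fun j _ => hint (c j)
  have hFint : ∀ i, Integrable (F i) μ := by
    intro i
    rw [hFeq i]
    exact ((((((hint (c i)).const_mul _).add ((hint2 (c i) (c i)).const_mul _)).add
      ((hintsum1 i).const_mul _)).sub (integrable_const _)).sub
      ((hint (c i)).const_mul _)).sub ((hintsum2 i).const_mul _)
  have hFval : ∀ i, ∫ ω, F i ω ∂μ
      = β i + γ * (4 * ∑ j ∈ N i, E (c i) (c j) - (d i : ℝ)) := by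
    intro i
    have i1 : Integrable (fun ω => 4 * α i * t ω (c i)) μ := (hint (c i)).const_mul _
    have i2 : Integrable (fun ω => (4 * β i) * (t ω (c i) * t ω (c i))) μ :=
      (hint2 (c i) (c i)).const_mul _
    have i3 : Integrable (fun ω => (4 * γ) * ∑ j ∈ N i, t ω (c i) * t ω (c j)) μ :=
      (hintsum1 i).const_mul _
    have i4 : Integrable (fun _ : Ω => (2 * α i : ℝ)) μ := integrable_const _
    have i5 : Integrable (fun ω => (2 * β i) * t ω (c i)) μ := (hint (c i)).const_mul _
    have i6 : Integrable (fun ω => (2 * γ) * ∑ j ∈ N i, t ω (c j)) μ :=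
      (hintsum2 i).const_mul _
    have j0 : Integrable (fun ω => 4 * α i * t ω (c i)
        + (4 * β i) * (t ω (c i) * t ω (c i))) μ := i1.add i2
    have j1 : Integrable (fun ω => 4 * α i * t ω (c i)
        + (4 * β i) * (t ω (c i) * t ω (c i))
        + (4 * γ) * ∑ j ∈ N i, t ω (c i) * t ω (c j)) μ := j0.add i3
    have j2 : Integrable (fun ω => 4 * α i * t ω (c i)
        + (4 * β i) * (t ω (c i) * t ω (c i))
        + (4 * γ) * ∑ j ∈ N i, t ω (c i) * t ω (c j) - (2 * α i)) μ := j1.sub i4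
    have j3 : Integrable (fun ω => 4 * α i * t ω (c i)
        + (4 * β i) * (t ω (c i) * t ω (c i))
        + (4 * γ) * ∑ j ∈ N i, t ω (c i) * t ω (c j) - (2 * α i)
        - (2 * β i) * t ω (c i)) μ := j2.sub i5
    rw [hFeq i]
    rw [integral_sub j3 i6,
        integral_sub j2 i5,
        integral_sub j1 i4,
        integral_add j0 i3, integral_add i1 i2,
        integral_const_mul, integral_const_mul, integral_const_mul, integral_const_mul,
        integral_const, integral_finset_sum _ (fun j _ => hint2 (c i) (c j)),
        integral_const_mul, integral_const_mul,
        integral_finset_sum _ (fun j _ => hint (c j))]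
    have h2 : ∑ j ∈ N i, ∫ ω, t ω (c j) ∂μ = (d i : ℝ) / 2 := by
      rw [Finset.sum_congr rfl fun j _ => hE (c j), Finset.sum_const, hd i, nsmul_eq_mul]
      ring
    have h3 : ∑ j ∈ N i, ∫ ω, t ω (c i) * t ω (c j) ∂μ = ∑ j ∈ N i, E (c i) (c j) := rfl
    have h4 : (∫ ω, t ω (c i) * t ω (c i) ∂μ) = E (c i) (c i) := rfl
    rw [hE (c i), h2, h3, h4, hEdiag (c i)]
    simp only [measure_univ, probReal_univ, ENNReal.toReal_one, smul_eq_mul, one_mul]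
    ring
  -- compute the expectation of τhat
  have hmean : ∫ ω, τhat ω ∂μ
      = (1 / (n:ℝ)) * ∑ i, (β i + γ * (4 * ∑ j ∈ N i, E (c i) (c j) - (d i : ℝ))) := by
    have h1 : (fun ω => τhat ω) = fun ω => (1 / (n:ℝ)) * ∑ i, F i ω := funext hτhat'
    rw [h1, integral_const_mul, integral_finset_sum _ (fun i _ => hFint i)]
    congr 1
    exact Finset.sum_congr rfl fun i _ => hFval i
  -- regrouping: cluster-level sums
  have regroup : ∀ f : Fin K → Fin K → ℝ,
      ∑ i, ∑ j ∈ N i, f (c i) (c j) = ∑ k, ∑ l, C k l * f k l := by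
    intro f
    have step1 : ∀ i : Fin n, ∑ j ∈ N i, f (c i) (c j)
        = ∑ l, (((N i).filter (fun v => c v = l)).card : ℝ) * f (c i) l := by
      intro i
      rw [← Finset.sum_fiberwise (N i) (fun j => c j) (fun j => f (c i) (c j))]
      refine Finset.sum_congr rfl fun l _ => ?_
      rw [Finset.sum_congr rfl (fun j hj => by
        rw [(Finset.mem_filter.mp hj).2]), Finset.sum_const, nsmul_eq_mul]
    calc ∑ i, ∑ j ∈ N i, f (c i) (c j)
        = ∑ k, ∑ i ∈ Finset.univ.filter (fun u => c u = k),
            ∑ j ∈ N i, f (c i) (c j) :=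
          (Finset.sum_fiberwise Finset.univ (fun i => c i)
            (fun i => ∑ j ∈ N i, f (c i) (c j))).symm
      _ = ∑ k, ∑ l, C k l * f k l := by
          refine Finset.sum_congr rfl fun k _ => ?_
          rw [Finset.sum_congr rfl (fun i hi => by
            rw [step1 i, (Finset.mem_filter.mp hi).2]), Finset.sum_comm]
          refine Finset.sum_congr rfl fun l _ => ?_
          rw [hC, Finset.sum_mul]
  -- trace identity
  have htrace : Matrix.trace (C * Covt) = ∑ k, ∑ l, C k l * (E k l - 1/4) := by
    simp only [Matrix.trace, Matrix.diag, Matrix.mul_apply]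
    refine Finset.sum_congr rfl fun k _ => Finset.sum_congr rfl fun l _ => ?_
    rw [hCovt l k, hE l, hE k]
    have h7 : (∫ ω, t ω l * t ω k ∂μ) = E k l := hEsymm l k
    rw [h7]
    norm_num
  -- assemble
  rw [hmean, hτ, htrace, ← mul_sub, ← Finset.sum_sub_distrib]
  have lhs_eq : ∑ i, ((β i + γ * (4 * ∑ j ∈ N i, E (c i) (c j) - (d i:ℝ)))
        - (β i + γ * (d i:ℝ)))
      = γ * ∑ i, ∑ j ∈ N i, (4 * E (c i) (c j) - 2) := by
    rw [Finset.mul_sum]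
    refine Finset.sum_congr rfl fun i _ => ?_
    have h5 : ∑ j ∈ N i, ((4:ℝ) * E (c i) (c j) - 2)
        = 4 * ∑ j ∈ N i, E (c i) (c j) - 2 * (d i : ℝ) := by
      rw [Finset.sum_sub_distrib, ← Finset.mul_sum, Finset.sum_const, hd i, nsmul_eq_mul]
      ring
    rw [h5]
    ring
  rw [lhs_eq, regroup (fun k l => 4 * E k l - 2)]
  have rhs_eq : (4:ℝ) * ∑ k, ∑ l, C k l * (E k l - 1/4) - ∑ k, ∑ l, C k l
      = ∑ k, ∑ l, C k l * (4 * E k l - 2) := by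
    rw [Finset.mul_sum, ← Finset.sum_sub_distrib]
    refine Finset.sum_congr rfl fun k _ => ?_
    rw [Finset.mul_sum, ← Finset.sum_sub_distrib]
    exact Finset.sum_congr rfl fun l _ => by ring
  rw [rhs_eq]
  ring
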